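/- Let k ≥ 2 and suppose ℂ^k contains a SIC-POVM. Let a_1, a_2 ∈ ℂ^k be orthonormal vectors and let s = a_1 ⊗ a_2 + a_2 ⊗ a_1 ∈ ℂ^k ⊗ ℂ^k. Then for every real ε with 0 ≤ ε ≤ (k+1)/(12k), the matrix P_sym^{k,2} − ε·s s^* ∈ M_{k²}(ℂ) is separable. -/

import Mathlib

open Matrix Finset
open scoped Kronecker

/-- The flip operator on ℂ^k ⊗ ℂ^k. -/
noncomputable def flipOp (k : ℕ) : Matrix (Fin k × Fin k) (Fin k × Fin k) ℂ :=
  Matrix.of fun p q => if p.1 = q.2 ∧ p.2 = q.1 then 1 else 0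

/-- Orthogonal projection onto the symmetric subspace of ℂ^k ⊗ ℂ^k. -/
noncomputable def psym (k : ℕ) : Matrix (Fin k × Fin k) (Fin k × Fin k) ℂ :=
  (1 / 2 : ℂ) • (1 + flipOp k)

/-- Separability of a matrix in M_k(ℂ) ⊗ M_k(ℂ) ≅ M_{k²}(ℂ). -/
def Separable {k : ℕ} (δ : Matrix (Fin k × Fin k) (Fin k × Fin k) ℂ) : Prop :=
  ∃ (N : ℕ) (x y : Fin N → Fin k → ℂ),
    δ = ∑ i, (Matrix.vecMulVec (x i) (star (x i))) ⊗ₖ (Matrix.vecMulVec (y i) (star (y i)))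

/-- ℂ^k contains a SIC-POVM: k² unit vectors with pairwise squared overlaps 1/(k+1). -/
def HasSICPOVM (k : ℕ) : Prop :=
  ∃ v : Fin (k ^ 2) → Fin k → ℂ,
    (∀ i, ∑ a, Complex.normSq (v i a) = 1) ∧
    ∀ i j, i ≠ j → ‖∑ a, star (v i a) * v j a‖ ^ 2 = 1 / ((k : ℝ) + 1)

lemma trace_vmv_mul (k : ℕ) (x y : Fin k → ℂ) :
    Matrix.trace (vecMulVec x (star x) * vecMulVec y (star y))
      = (∑ a, (starRingEnd ℂ) (x a) * y a) * (∑ a, (starRingEnd ℂ) (y a) * x a) := by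
  rw [Finset.sum_mul_sum, Matrix.trace]
  simp only [Matrix.diag_apply, Matrix.mul_apply, vecMulVec_apply, Pi.star_apply,
    RCLike.star_def]
  rw [Finset.sum_comm]
  refine Finset.sum_congr rfl fun q _ => ?_
  refine Finset.sum_congr rfl fun p _ => ?_
  ring

lemma trace_vmv (k : ℕ) (x : Fin k → ℂ) :
    Matrix.trace (vecMulVec x (star x)) = ∑ a, (starRingEnd ℂ) (x a) * x a := by
  simp only [Matrix.trace, Matrix.diag_apply, vecMulVec_apply, Pi.star_apply, RCLike.star_def]
  exact Finset.sum_congr rfl fun a _ => mul_comm _ _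

lemma trace_kron_flip (k : ℕ) (A B : Matrix (Fin k) (Fin k) ℂ) :
    Matrix.trace ((A ⊗ₖ B) * flipOp k) = Matrix.trace (A * B) := by
  simp only [Matrix.trace, Matrix.diag_apply, Matrix.mul_apply, flipOp, Matrix.of_apply,
    Matrix.kroneckerMap_apply, Fintype.sum_prod_type, mul_ite, mul_one, mul_zero, ite_and]
  refine Finset.sum_congr rfl fun p1 _ => ?_
  refine Finset.sum_congr rfl fun p2 _ => ?_
  rw [Finset.sum_comm]
  simp only [Finset.sum_ite_eq', Finset.mem_univ, if_true]

lemma trace_flip (k : ℕ) : Matrix.trace (flipOp k) = (k : ℂ) := by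
  simp only [Matrix.trace, Matrix.diag_apply, flipOp, Matrix.of_apply, Fintype.sum_prod_type]
  simp [Finset.sum_ite_eq, eq_comm]

lemma flip_mul_flip (k : ℕ) : flipOp k * flipOp k = 1 := by
  ext p q
  simp only [Matrix.mul_apply, flipOp, Matrix.of_apply, Fintype.sum_prod_type, ite_and,
    mul_ite, mul_one, mul_zero, ite_mul, zero_mul]
  rw [Finset.sum_comm]
  simp only [Finset.sum_ite_eq', Finset.sum_ite_eq, Finset.mem_univ, if_true]
  simp [Matrix.one_apply, Prod.ext_iff, ite_and]

lemma kron_conjT {m n : Type*} [Fintype m] [Fintype n]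
    (A : Matrix m m ℂ) (B : Matrix n n ℂ) : (A ⊗ₖ B)ᴴ = Aᴴ ⊗ₖ Bᴴ := by
  ext p q
  simp [Matrix.conjTranspose_apply, Matrix.kroneckerMap_apply, _root_.map_mul]

lemma vmv_conjT {k : ℕ} (x : Fin k → ℂ) :
    (vecMulVec x (star x))ᴴ = vecMulVec x (star x) := by
  ext p q
  simp only [Matrix.conjTranspose_apply, vecMulVec_apply, Pi.star_apply, RCLike.star_def]
  rw [RingHom.map_mul, Complex.conj_conj]
  ring

lemma flip_conjT (k : ℕ) : (flipOp k)ᴴ = flipOp k := by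
  ext p q
  simp only [Matrix.conjTranspose_apply, flipOp, Matrix.of_apply]
  split_ifs with h1 h2 h2
  · simp
  · exact absurd ⟨h1.2.symm, h1.1.symm⟩ h2
  · exact absurd ⟨h2.2.symm, h2.1.symm⟩ h1
  · simp

lemma psym_conjT (k : ℕ) : (psym k)ᴴ = psym k := by
  unfold psym
  rw [Matrix.conjTranspose_smul, Matrix.conjTranspose_add, Matrix.conjTranspose_one, flip_conjT]
  norm_num

lemma matrix_eq_zero_of_trace {n : Type*} [Fintype n] (A : Matrix n n ℂ)
    (h : Matrix.trace (A * Aᴴ) = 0) : A = 0 := by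
  have h1 : Matrix.trace (A * Aᴴ) = ((∑ p, ∑ q, Complex.normSq (A p q) : ℝ) : ℂ) := by
    rw [Matrix.trace]
    push_cast
    refine Finset.sum_congr rfl fun p _ => ?_
    rw [Matrix.diag_apply, Matrix.mul_apply]
    refine Finset.sum_congr rfl fun q _ => ?_
    rw [Matrix.conjTranspose_apply, ← Complex.mul_conj]
    rfl
  rw [h1] at h
  norm_cast at h
  ext p q
  have hp := (Finset.sum_eq_zero_iff_of_nonneg
    (fun i _ => Finset.sum_nonneg fun j _ => Complex.normSq_nonneg _)).mp h p (Finset.mem_univ p)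
  have hq := (Finset.sum_eq_zero_iff_of_nonneg
    (fun j _ => Complex.normSq_nonneg _)).mp hp q (Finset.mem_univ q)
  simpa using Complex.normSq_eq_zero.mp hq

lemma sum_ite_diag (n : ℕ) (aa bb : ℂ) :
    (∑ i : Fin n, ∑ j : Fin n, if i = j then aa else bb)
      = (n : ℂ) * aa + ((n : ℂ)^2 - n) * bb := by
  have h1 : ∀ i : Fin n, (∑ j : Fin n, if i = j then aa else bb) = aa + ((n : ℂ) - 1) * bb := by
    intro i
    have h2 : ∀ j : Fin n, (if i = j then aa else bb) = (if i = j then aa - bb else 0) + bb := by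
      intro j; split_ifs <;> ring
    rw [Finset.sum_congr rfl fun j _ => h2 j, Finset.sum_add_distrib, Finset.sum_ite_eq,
      if_pos (Finset.mem_univ i), Finset.sum_const, Finset.card_univ, Fintype.card_fin,
      nsmul_eq_mul]
    ring
  rw [Finset.sum_congr rfl fun i _ => h1 i, Finset.sum_const, Finset.card_univ,
    Fintype.card_fin, nsmul_eq_mul]
  ring

lemma psym_idem (k : ℕ) : psym k * psym k = psym k := by
  have expand : (1 + flipOp k) * (1 + flipOp k) = (2:ℂ) • (1 + flipOp k) := by
    simp only [add_mul, mul_add, one_mul, mul_one, flip_mul_flip]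
    rw [two_smul]
    abel
  unfold psym
  rw [smul_mul_assoc, mul_smul_comm, expand, smul_smul, smul_smul]
  norm_num

lemma trace_psym (k : ℕ) : Matrix.trace (psym k) = ((k:ℂ)^2 + k)/2 := by
  unfold psym
  rw [Matrix.trace_smul, Matrix.trace_add, Matrix.trace_one, trace_flip]
  simp [Fintype.card_prod]
  push_cast
  ring

lemma sic_two_design (k : ℕ) (hk : 2 ≤ k) (v : Fin (k^2) → Fin k → ℂ)
    (hv1 : ∀ i, ∑ a, (starRingEnd ℂ) (v i a) * v i a = 1)
    (hv2 : ∀ i j, i ≠ j →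
      (∑ a, (starRingEnd ℂ) (v i a) * v j a) * (∑ a, (starRingEnd ℂ) (v j a) * v i a)
        = 1/((k:ℂ)+1)) :
    psym k = (((k:ℂ)+1)/(2*(k:ℂ))) •
      ∑ i, (vecMulVec (v i) (star (v i))) ⊗ₖ (vecMulVec (v i) (star (v i))) := by
  have hk0 : (k:ℂ) ≠ 0 := Nat.cast_ne_zero.mpr (by omega)
  have hk1 : (k:ℂ) + 1 ≠ 0 := by
    have : ((k+1:ℕ):ℂ) ≠ 0 := Nat.cast_ne_zero.mpr (by omega)
    push_cast at this; exact this
  set κ : ℂ := ((k:ℂ)+1)/(2*(k:ℂ)) with hκ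
  set M : Fin (k^2) → Matrix (Fin k × Fin k) (Fin k × Fin k) ℂ :=
    fun i => (vecMulVec (v i) (star (v i))) ⊗ₖ (vecMulVec (v i) (star (v i))) with hM
  set S : Matrix (Fin k × Fin k) (Fin k × Fin k) ℂ := ∑ i, M i with hS
  have hMMtr : ∀ i j, Matrix.trace (M i * M j) = if i = j then 1 else (1/((k:ℂ)+1))^2 := by
    intro i j
    rw [hM]
    simp only
    rw [← Matrix.mul_kronecker_mul, Matrix.trace_kronecker, trace_vmv_mul]
    by_cases h : i = j
    · subst h; rw [hv1, if_pos rfl]; norm_num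
    · rw [hv2 i j h, if_neg h]; ring
  have hMtr : ∀ i, Matrix.trace (M i) = 1 := by
    intro i
    rw [hM]
    simp only
    rw [Matrix.trace_kronecker, trace_vmv, hv1]
    norm_num
  have hMFtr : ∀ i, Matrix.trace (M i * flipOp k) = 1 := by
    intro i
    rw [hM]
    simp only
    rw [trace_kron_flip, trace_vmv_mul, hv1]
    norm_num
  have hStr : Matrix.trace S = (k:ℂ)^2 := by
    rw [hS, Matrix.trace_sum, Finset.sum_congr rfl fun i _ => hMtr i, Finset.sum_const,
      Finset.card_univ, Fintype.card_fin, nsmul_eq_mul]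
    push_cast; ring
  have hFStr : Matrix.trace (flipOp k * S) = (k:ℂ)^2 := by
    rw [hS, Finset.mul_sum, Matrix.trace_sum]
    rw [Finset.sum_congr rfl fun i _ => (Matrix.trace_mul_comm _ _).trans (hMFtr i),
      Finset.sum_const, Finset.card_univ, Fintype.card_fin, nsmul_eq_mul]
    push_cast; ring
  have hPS : Matrix.trace (psym k * S) = (k:ℂ)^2 := by
    show Matrix.trace (((1 / 2 : ℂ) • (1 + flipOp k)) * S) = _
    rw [smul_mul_assoc, Matrix.trace_smul, add_mul, one_mul, Matrix.trace_add, hStr, hFStr,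
      smul_eq_mul]
    ring
  have hSS : Matrix.trace (S * S)
      = (k:ℂ)^2 * 1 + (((k:ℂ)^2)^2 - (k:ℂ)^2) * (1/((k:ℂ)+1))^2 := by
    rw [hS, Finset.sum_mul_sum, Matrix.trace_sum]
    rw [Finset.sum_congr rfl fun i _ => Matrix.trace_sum _ _]
    rw [Finset.sum_congr rfl fun i _ => Finset.sum_congr rfl fun j _ => hMMtr i j,
      sum_ite_diag]
    push_cast; ring
  set A : Matrix (Fin k × Fin k) (Fin k × Fin k) ℂ := psym k - κ • S with hA
  have hκstar : star κ = κ := by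
    rw [hκ]
    simp only [star_div₀, star_add, star_one, star_mul', star_natCast, star_ofNat]
  have hSH : Sᴴ = S := by
    rw [hS, Matrix.conjTranspose_sum]
    refine Finset.sum_congr rfl fun i _ => ?_
    rw [hM]
    simp only
    rw [kron_conjT, vmv_conjT]
  have hAH : Aᴴ = A := by
    rw [hA, Matrix.conjTranspose_sub, psym_conjT, Matrix.conjTranspose_smul, hκstar, hSH]
  have htr : Matrix.trace (A * Aᴴ) = 0 := by
    have hSP : Matrix.trace (S * psym k) = (k:ℂ)^2 := by
      rw [Matrix.trace_mul_comm]; exact hPS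
    rw [hAH, hA]
    simp only [sub_mul, mul_sub, smul_mul_assoc, mul_smul_comm, smul_smul,
      Matrix.trace_sub, Matrix.trace_smul, smul_eq_mul]
    rw [psym_idem, trace_psym, hPS, hSP, hSS]
    rw [hκ]
    field_simp
    ring
  have hA0 : A = 0 := matrix_eq_zero_of_trace A htr
  rw [hA] at hA0
  have := sub_eq_zero.mp hA0
  rw [this, hκ]


lemma vmv_smul_c {k : ℕ} (t : ℝ) (x : Fin k → ℂ) :
    vecMulVec ((t:ℂ) • x) (star ((t:ℂ) • x)) = ((t^2 : ℝ) : ℂ) • vecMulVec x (star x) := by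
  ext p q
  simp only [vecMulVec_apply, Pi.smul_apply, Pi.star_apply, Matrix.smul_apply, smul_eq_mul,
    RCLike.star_def]
  rw [RingHom.map_mul, Complex.conj_ofReal]
  push_cast
  ring

lemma separable_of_sum {k n : ℕ} (c : Fin n → ℝ) (hc : ∀ i, 0 ≤ c i)
    (x y : Fin n → Fin k → ℂ) :
    Separable (∑ i, ((c i : ℂ)) •
      ((vecMulVec (x i) (star (x i))) ⊗ₖ (vecMulVec (y i) (star (y i))))) := by
  refine ⟨n, fun i => ((Real.sqrt (c i) : ℝ) : ℂ) • x i, y, ?_⟩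
  refine Finset.sum_congr rfl fun i _ => ?_
  rw [vmv_smul_c, Matrix.smul_kronecker, Real.sq_sqrt (hc i)]

lemma Separable.smul_real {k : ℕ} {A : Matrix (Fin k × Fin k) (Fin k × Fin k) ℂ}
    (r : ℝ) (hr : 0 ≤ r) (h : Separable A) : Separable ((r : ℂ) • A) := by
  obtain ⟨N, x, y, hx⟩ := h
  rw [hx, Finset.smul_sum]
  exact separable_of_sum (fun _ => r) (fun _ => hr) x y

lemma Separable.add {k : ℕ} {A B : Matrix (Fin k × Fin k) (Fin k × Fin k) ℂ}
    (hA : Separable A) (hB : Separable B) : Separable (A + B) := by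
  obtain ⟨N1, x1, y1, h1⟩ := hA
  obtain ⟨N2, x2, y2, h2⟩ := hB
  refine ⟨N1 + N2, Fin.append x1 x2, Fin.append y1 y2, ?_⟩
  rw [Fin.sum_univ_add]
  simp only [Fin.append_left, Fin.append_right]
  rw [h1, h2]

lemma separable_single {k : ℕ} (x y : Fin k → ℂ) :
    Separable ((vecMulVec x (star x)) ⊗ₖ (vecMulVec y (star y))) :=
  ⟨1, fun _ => x, fun _ => y, by rw [Fin.sum_univ_one]⟩

lemma four_root (x1 x2 x3 x4 y1 y2 y3 y4 : ℂ) :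
    ((x1 + (1:ℂ)*x2) * (x3 + (1:ℂ)*x4)) * ((y1 + (1:ℂ)*y2) * (y3 + (1:ℂ)*y4))
    + ((x1 + Complex.I*x2) * (x3 + Complex.I*x4))
        * ((y1 + (-Complex.I)*y2) * (y3 + (-Complex.I)*y4))
    + ((x1 + (-1:ℂ)*x2) * (x3 + (-1:ℂ)*x4)) * ((y1 + (-1:ℂ)*y2) * (y3 + (-1:ℂ)*y4))
    + ((x1 + (-Complex.I)*x2) * (x3 + (-Complex.I)*x4))
        * ((y1 + Complex.I*y2) * (y3 + Complex.I*y4))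
    = (4:ℂ) * ((x1*x4 + x2*x3) * (y1*y4 + y2*y3))
      + (4:ℂ) * ((x1*x3) * (y1*y3)) + (4:ℂ) * ((x2*x4) * (y2*y4)) := by
  linear_combination (-2*x2*x4*y2*y4 + 2*x2*x4*y1*y3 - 2*x2*x3*y2*y3 - 2*x2*x3*y1*y4
    - 2*x1*x4*y2*y3 - 2*x1*x4*y1*y4 + 2*x1*x3*y2*y4
    + 2*x2*x4*y2*y4*(Complex.I*Complex.I)) * Complex.I_mul_I

lemma exists_isometry_matrix (k : ℕ) (u c : Fin k → ℂ)
    (hu : ∑ a, Complex.normSq (u a) = 1) (hc : ∑ a, Complex.normSq (c a) = 1) :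
    ∃ U : Matrix (Fin k) (Fin k) ℂ,
      (∀ x y : Fin k → ℂ, ∑ a, (starRingEnd ℂ) (U.mulVec x a) * U.mulVec y a
          = ∑ a, (starRingEnd ℂ) (x a) * y a)
      ∧ (∀ a, U.mulVec u a = c a) := by
  have hk : 0 < k := by
    rcases Nat.eq_zero_or_pos k with h | h
    · subst h; simp at hu
    · exact h
  set E := EuclideanSpace ℂ (Fin k)
  have hnorm : ∀ x : Fin k → ℂ, (∑ a, Complex.normSq (x a) = 1) →
      ‖((WithLp.equiv 2 (Fin k → ℂ)).symm x : E)‖ = 1 := by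
    intro x hx
    rw [EuclideanSpace.norm_eq]
    have : ∀ a, ‖((WithLp.equiv 2 (Fin k → ℂ)).symm x : E) a‖ ^ 2 = Complex.normSq (x a) := by
      intro a
      rw [Complex.sq_norm]
      rfl
    simp only [this, hx, Real.sqrt_one]
  have hON : ∀ (x : Fin k → ℂ), (∑ a, Complex.normSq (x a) = 1) →
      ∃ b : OrthonormalBasis (Fin k) ℂ E, b ⟨0, hk⟩ = (WithLp.equiv 2 (Fin k → ℂ)).symm x := by
    intro x hx
    have hcard : Module.finrank ℂ E = Fintype.card (Fin k) := by
      simp [E, finrank_euclideanSpace]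
    have horth : Orthonormal ℂ (({⟨0, hk⟩} : Set (Fin k)).restrict
        (fun _ => ((WithLp.equiv 2 (Fin k → ℂ)).symm x : E))) := by
      constructor
      · intro i; exact hnorm x hx
      · intro i j hij
        exact absurd (Subsingleton.elim i j) hij
    obtain ⟨b, hb⟩ := Orthonormal.exists_orthonormalBasis_extension_of_card_eq hcard horth
    exact ⟨b, hb _ rfl⟩
  obtain ⟨bu, hbu⟩ := hON u hu
  obtain ⟨bc, hbc⟩ := hON c hc
  set T : E ≃ₗᵢ[ℂ] E := bu.repr.trans bc.repr.symm with hT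
  set f : (Fin k → ℂ) →ₗ[ℂ] (Fin k → ℂ) :=
    (WithLp.linearEquiv 2 ℂ (Fin k → ℂ)).toLinearMap ∘ₗ T.toLinearMap ∘ₗ
      (WithLp.linearEquiv 2 ℂ (Fin k → ℂ)).symm.toLinearMap with hf
  refine ⟨LinearMap.toMatrix' f, ?_, ?_⟩
  · intro x y
    have hmv : ∀ z : Fin k → ℂ, (LinearMap.toMatrix' f).mulVec z = f z := by
      intro z
      rw [← Matrix.toLin'_apply, Matrix.toLin'_toMatrix']
    rw [hmv, hmv]
    have := T.inner_map_map ((WithLp.equiv 2 (Fin k → ℂ)).symm x)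
      ((WithLp.equiv 2 (Fin k → ℂ)).symm y)
    rw [PiLp.inner_apply, PiLp.inner_apply] at this
    convert this using 2 <;> rw [RCLike.inner_apply'] <;> rfl
  · have hmv : (LinearMap.toMatrix' f).mulVec u = f u := by
      rw [← Matrix.toLin'_apply, Matrix.toLin'_toMatrix']
    intro a
    rw [hmv]
    have h1 : T ((WithLp.equiv 2 (Fin k → ℂ)).symm u) = (WithLp.equiv 2 (Fin k → ℂ)).symm c := by
      rw [hT]
      simp only [LinearIsometryEquiv.trans_apply]
      rw [← hbu, bu.repr_self, ← hbc, ← bc.repr_self ⟨0, hk⟩]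
      exact bc.repr.symm_apply_apply _
    have : f u = c := by
      simp only [hf, LinearMap.coe_comp, Function.comp_apply, LinearEquiv.coe_coe]
      show (WithLp.equiv 2 (Fin k → ℂ)) (T ((WithLp.equiv 2 (Fin k → ℂ)).symm u)) = c
      rw [h1]
      exact (WithLp.equiv 2 (Fin k → ℂ)).apply_symm_apply c
    rw [this]


lemma ip_of_normSq {k : ℕ} {x : Fin k → ℂ} (h : ∑ a, Complex.normSq (x a) = 1) :
    ∑ a, (starRingEnd ℂ) (x a) * x a = 1 := by
  have h2 : ((∑ a, Complex.normSq (x a) : ℝ) : ℂ) = ∑ a, (starRingEnd ℂ) (x a) * x a := by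
    push_cast
    refine Finset.sum_congr rfl fun a _ => ?_
    rw [← Complex.mul_conj]
    exact mul_comm _ _
  rw [h] at h2
  exact_mod_cast h2.symm

lemma unit_comb {k : ℕ} {a₁ a₂ : Fin k → ℂ}
    (ha₁ : ∑ i, (starRingEnd ℂ) (a₁ i) * a₁ i = 1)
    (ha₂ : ∑ i, (starRingEnd ℂ) (a₂ i) * a₂ i = 1)
    (h12 : ∑ i, (starRingEnd ℂ) (a₁ i) * a₂ i = 0)
    (h21 : ∑ i, (starRingEnd ℂ) (a₂ i) * a₁ i = 0)
    (ω : ℂ) (hω : (starRingEnd ℂ) ω * ω = 1) :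
    ∑ a, Complex.normSq ((((Real.sqrt 2)⁻¹ : ℝ) : ℂ) * (a₁ a + ω * a₂ a)) = 1 := by
  set r : ℂ := (((Real.sqrt 2)⁻¹ : ℝ) : ℂ) with hr
  have hrr : (starRingEnd ℂ) r * r = 1/2 := by
    rw [hr, Complex.conj_ofReal, ← Complex.ofReal_mul, ← mul_inv,
      Real.mul_self_sqrt (by norm_num : (0:ℝ) ≤ 2)]
    norm_num
  have hbb : ∑ a, (starRingEnd ℂ) (a₁ a + ω * a₂ a) * (a₁ a + ω * a₂ a) = 2 := by
    have e : ∀ a, (starRingEnd ℂ) (a₁ a + ω * a₂ a) * (a₁ a + ω * a₂ a)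
        = ((starRingEnd ℂ) (a₁ a) * a₁ a) + ω * ((starRingEnd ℂ) (a₁ a) * a₂ a)
          + (starRingEnd ℂ) ω * ((starRingEnd ℂ) (a₂ a) * a₁ a)
          + ((starRingEnd ℂ) ω * ω) * ((starRingEnd ℂ) (a₂ a) * a₂ a) := by
      intro a
      rw [RingHom.map_add, RingHom.map_mul]
      ring
    rw [Finset.sum_congr rfl fun a _ => e a, Finset.sum_add_distrib, Finset.sum_add_distrib,
      Finset.sum_add_distrib, ← Finset.mul_sum, ← Finset.mul_sum, ← Finset.mul_sum,
      ha₁, ha₂, h12, h21, hω]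
    ring
  have hC : ((∑ a, Complex.normSq (r * (a₁ a + ω * a₂ a)) : ℝ) : ℂ) = ((1:ℝ) : ℂ) := by
    push_cast
    have key : ∀ a : Fin k, ((Complex.normSq (r * (a₁ a + ω * a₂ a)) : ℝ) : ℂ)
        = ((starRingEnd ℂ) r * r)
          * ((starRingEnd ℂ) (a₁ a + ω * a₂ a) * (a₁ a + ω * a₂ a)) := by
      intro a
      rw [← Complex.mul_conj, RingHom.map_mul]
      ring
    rw [Finset.sum_congr rfl fun a _ => key a, ← Finset.mul_sum, hbb, hrr]
    norm_num
  exact_mod_cast hC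

lemma psym_sub_sep (k : ℕ) (hk : 2 ≤ k) (hsic : HasSICPOVM k) (c : Fin k → ℂ)
    (hc : ∑ a, Complex.normSq (c a) = 1) (μ : ℝ) (hμ0 : 0 ≤ μ)
    (hμ : μ ≤ ((k:ℝ)+1)/(2*k)) :
    Separable (psym k - (μ:ℂ) • ((vecMulVec c (star c)) ⊗ₖ (vecMulVec c (star c)))) := by
  obtain ⟨v, hv1, hv2⟩ := hsic
  have hkpos : 0 < k := by omega
  have hk2pos : 0 < k ^ 2 := by positivity
  set i0 : Fin (k^2) := ⟨0, hk2pos⟩ with hi0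
  obtain ⟨U, hUip, hUc⟩ := exists_isometry_matrix k (v i0) c (hv1 i0) hc
  set w : Fin (k^2) → Fin k → ℂ := fun i => U.mulVec (v i) with hw
  have hw1 : ∀ i, ∑ a, (starRingEnd ℂ) (w i a) * w i a = 1 := by
    intro i
    rw [hw]
    simp only
    rw [hUip (v i) (v i)]
    exact ip_of_normSq (hv1 i)
  have hconj : ∀ i j : Fin (k^2), ∑ a, (starRingEnd ℂ) (v j a) * v i a
      = (starRingEnd ℂ) (∑ a, (starRingEnd ℂ) (v i a) * v j a) := by
    intro i j
    rw [map_sum]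
    refine Finset.sum_congr rfl fun a _ => ?_
    rw [RingHom.map_mul, Complex.conj_conj]
    ring
  have hw2 : ∀ i j, i ≠ j →
      (∑ a, (starRingEnd ℂ) (w i a) * w j a) * (∑ a, (starRingEnd ℂ) (w j a) * w i a)
        = 1/((k:ℂ)+1) := by
    intro i j hij
    rw [hw]
    simp only
    rw [hUip (v i) (v j), hUip (v j) (v i), hconj i j, Complex.mul_conj]
    have habs := hv2 i j hij
    rw [← Complex.sq_norm]
    have : ‖∑ a, (starRingEnd ℂ) (v i a) * v j a‖ ^ 2 = 1/((k:ℝ)+1) := by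
      convert habs using 3
      simp [RCLike.star_def]
    rw [this]
    push_cast
    ring
  have hdesign := sic_two_design k hk w hw1 hw2
  have hwi0 : w i0 = c := funext hUc
  set κr : ℝ := ((k:ℝ)+1)/(2*k) with hκr
  set cr : Fin (k^2) → ℝ := fun i => κr - if i = i0 then μ else 0 with hcr
  have hcr0 : ∀ i, 0 ≤ cr i := by
    intro i
    rw [hcr]
    simp only
    split_ifs with h
    · linarith
    · have : 0 ≤ κr := by
        rw [hκr]; positivity
      linarith
  have heq : psym k - (μ:ℂ) • ((vecMulVec c (star c)) ⊗ₖ (vecMulVec c (star c)))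
      = ∑ i, ((cr i : ℂ)) •
        ((vecMulVec (w i) (star (w i))) ⊗ₖ (vecMulVec (w i) (star (w i)))) := by
    rw [hdesign]
    have hμterm : (μ:ℂ) • ((vecMulVec c (star c)) ⊗ₖ (vecMulVec c (star c)))
        = ∑ i, (if i = i0 then (μ:ℂ) else 0) •
          ((vecMulVec (w i) (star (w i))) ⊗ₖ (vecMulVec (w i) (star (w i)))) := by
      have e : ∀ i : Fin (k^2), (if i = i0 then (μ:ℂ) else 0) •
          ((vecMulVec (w i) (star (w i))) ⊗ₖ (vecMulVec (w i) (star (w i))))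
          = (if i = i0 then (μ:ℂ) •
              ((vecMulVec (w i) (star (w i))) ⊗ₖ (vecMulVec (w i) (star (w i)))) else 0) := by
        intro i; split_ifs <;> simp
      symm
      rw [Finset.sum_congr rfl fun i _ => e i, Finset.sum_ite_eq' Finset.univ i0,
        if_pos (Finset.mem_univ i0), hwi0]
    rw [hμterm, Finset.smul_sum, ← Finset.sum_sub_distrib]
    refine Finset.sum_congr rfl fun i _ => ?_
    rw [← sub_smul]
    congr 1
    rw [hcr]
    simp only
    split_ifs with h
    · push_cast [hκr]; ring
    · push_cast [hκr]; ring
  rw [heq]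
  exact separable_of_sum cr hcr0 w w

theorem psym_minus_sym_pair_separable_sic (k : ℕ) (hk : 2 ≤ k) (hsic : HasSICPOVM k)
    (a₁ a₂ : Fin k → ℂ)
    (ha₁ : ∑ i, Complex.normSq (a₁ i) = 1) (ha₂ : ∑ i, Complex.normSq (a₂ i) = 1)
    (horth : ∑ i, star (a₁ i) * a₂ i = 0)
    (s : Fin k × Fin k → ℂ) (hs : ∀ p, s p = a₁ p.1 * a₂ p.2 + a₂ p.1 * a₁ p.2)
    (ε : ℝ) (hε0 : 0 ≤ ε) (hε : ε ≤ ((k : ℝ) + 1) / (12 * k)) :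
    Separable (psym k - (ε : ℂ) • Matrix.vecMulVec s (star s)) := by
  have hkpos : 0 < k := by omega
  have hkR : (0:ℝ) < k := by exact_mod_cast hkpos
  have ha₁c : ∑ i, (starRingEnd ℂ) (a₁ i) * a₁ i = 1 := ip_of_normSq ha₁
  have ha₂c : ∑ i, (starRingEnd ℂ) (a₂ i) * a₂ i = 1 := ip_of_normSq ha₂
  have h12 : ∑ i, (starRingEnd ℂ) (a₁ i) * a₂ i = 0 := by
    simpa [RCLike.star_def] using horth
  have h21 : ∑ i, (starRingEnd ℂ) (a₂ i) * a₁ i = 0 := by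
    have h := congrArg (starRingEnd ℂ) h12
    rw [map_sum, map_zero] at h
    rw [← h]
    refine Finset.sum_congr rfl fun a _ => ?_
    rw [RingHom.map_mul, Complex.conj_conj]
    ring
  have hμ0 : (0:ℝ) ≤ 4 * ε := by linarith
  have hμε : 4 * ε ≤ ((k:ℝ)+1)/(2*k) := by
    rw [le_div_iff₀ (by positivity)]
    rw [le_div_iff₀ (by positivity)] at hε
    nlinarith
  set b0 : Fin k → ℂ := fun a => a₁ a + (1:ℂ) * a₂ a with hb0
  set b1 : Fin k → ℂ := fun a => a₁ a + Complex.I * a₂ a with hb1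
  set b2 : Fin k → ℂ := fun a => a₁ a + (-1:ℂ) * a₂ a with hb2
  set b3 : Fin k → ℂ := fun a => a₁ a + (-Complex.I) * a₂ a with hb3
  have hconv : ∀ bb : Fin k → ℂ,
      psym k - ((4*ε:ℝ):ℂ) •
        ((vecMulVec ((((Real.sqrt 2)⁻¹:ℝ):ℂ) • bb) (star ((((Real.sqrt 2)⁻¹:ℝ):ℂ) • bb)))
          ⊗ₖ (vecMulVec ((((Real.sqrt 2)⁻¹:ℝ):ℂ) • bb) (star ((((Real.sqrt 2)⁻¹:ℝ):ℂ) • bb))))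
      = psym k - (ε:ℂ) • ((vecMulVec bb (star bb)) ⊗ₖ (vecMulVec bb (star bb))) := by
    intro bb
    congr 1
    rw [vmv_smul_c, Matrix.smul_kronecker, Matrix.kronecker_smul, smul_smul, smul_smul]
    congr 1
    have h2 : ((Real.sqrt 2)⁻¹:ℝ)^2 = 1/2 := by
      rw [inv_pow, Real.sq_sqrt (by norm_num : (0:ℝ) ≤ 2)]
      norm_num
    rw [h2]
    push_cast
    ring
  have hω0 : (starRingEnd ℂ) (1:ℂ) * (1:ℂ) = 1 := by simp
  have hω1 : (starRingEnd ℂ) (Complex.I) * Complex.I = 1 := by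
    simp [Complex.conj_I]
  have hω2 : (starRingEnd ℂ) (-1:ℂ) * (-1:ℂ) = 1 := by simp
  have hω3 : (starRingEnd ℂ) (-Complex.I) * (-Complex.I) = 1 := by
    simp [Complex.conj_I]
  have sep_of : ∀ bb : Fin k → ℂ,
      (∑ a, Complex.normSq ((((Real.sqrt 2)⁻¹:ℝ):ℂ) • bb a)) = 1 →
      Separable (psym k - (ε:ℂ) • ((vecMulVec bb (star bb)) ⊗ₖ (vecMulVec bb (star bb)))) := by
    intro bb hunit
    have h := psym_sub_sep k hk hsic ((((Real.sqrt 2)⁻¹:ℝ):ℂ) • bb) hunit (4*ε) hμ0 hμε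
    rwa [hconv bb] at h
  have hG0 : Separable (psym k - (ε:ℂ) • ((vecMulVec b0 (star b0)) ⊗ₖ (vecMulVec b0 (star b0)))) :=
    sep_of b0 (unit_comb ha₁c ha₂c h12 h21 1 hω0)
  have hG1 : Separable (psym k - (ε:ℂ) • ((vecMulVec b1 (star b1)) ⊗ₖ (vecMulVec b1 (star b1)))) :=
    sep_of b1 (unit_comb ha₁c ha₂c h12 h21 Complex.I hω1)
  have hG2 : Separable (psym k - (ε:ℂ) • ((vecMulVec b2 (star b2)) ⊗ₖ (vecMulVec b2 (star b2)))) :=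
    sep_of b2 (unit_comb ha₁c ha₂c h12 h21 (-1) hω2)
  have hG3 : Separable (psym k - (ε:ℂ) • ((vecMulVec b3 (star b3)) ⊗ₖ (vecMulVec b3 (star b3)))) :=
    sep_of b3 (unit_comb ha₁c ha₂c h12 h21 (-Complex.I) hω3)
  have hkey : (vecMulVec b0 (star b0)) ⊗ₖ (vecMulVec b0 (star b0))
      + (vecMulVec b1 (star b1)) ⊗ₖ (vecMulVec b1 (star b1))
      + (vecMulVec b2 (star b2)) ⊗ₖ (vecMulVec b2 (star b2))
      + (vecMulVec b3 (star b3)) ⊗ₖ (vecMulVec b3 (star b3))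
      = (4:ℂ) • Matrix.vecMulVec s (star s)
        + (4:ℂ) • ((vecMulVec a₁ (star a₁)) ⊗ₖ (vecMulVec a₁ (star a₁)))
        + (4:ℂ) • ((vecMulVec a₂ (star a₂)) ⊗ₖ (vecMulVec a₂ (star a₂))) := by
    ext p q
    simp only [hb0, hb1, hb2, hb3, Matrix.add_apply, Matrix.smul_apply, Matrix.kroneckerMap_apply,
      vecMulVec_apply, Pi.star_apply, RCLike.star_def, smul_eq_mul]
    rw [hs p, hs q]
    simp only [RingHom.map_add, RingHom.map_mul, RingHom.map_neg, RingHom.map_one, Complex.conj_I]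
    linear_combination four_root (a₁ p.1) (a₂ p.1) (a₁ p.2) (a₂ p.2)
      ((starRingEnd ℂ) (a₁ q.1)) ((starRingEnd ℂ) (a₂ q.1))
      ((starRingEnd ℂ) (a₁ q.2)) ((starRingEnd ℂ) (a₂ q.2))
  have hmain : psym k - (ε : ℂ) • Matrix.vecMulVec s (star s)
      = ((1/4:ℝ):ℂ) • (psym k - (ε:ℂ) • ((vecMulVec b0 (star b0)) ⊗ₖ (vecMulVec b0 (star b0))))
        + ((1/4:ℝ):ℂ) • (psym k - (ε:ℂ) • ((vecMulVec b1 (star b1)) ⊗ₖ (vecMulVec b1 (star b1))))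
        + ((1/4:ℝ):ℂ) • (psym k - (ε:ℂ) • ((vecMulVec b2 (star b2)) ⊗ₖ (vecMulVec b2 (star b2))))
        + ((1/4:ℝ):ℂ) • (psym k - (ε:ℂ) • ((vecMulVec b3 (star b3)) ⊗ₖ (vecMulVec b3 (star b3))))
        + (ε:ℂ) • ((vecMulVec a₁ (star a₁)) ⊗ₖ (vecMulVec a₁ (star a₁)))
        + (ε:ℂ) • ((vecMulVec a₂ (star a₂)) ⊗ₖ (vecMulVec a₂ (star a₂))) := by
    have h4 : (ε:ℂ) • Matrix.vecMulVec s (star s)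
        = ((ε:ℂ)/4) • ((vecMulVec b0 (star b0)) ⊗ₖ (vecMulVec b0 (star b0))
            + (vecMulVec b1 (star b1)) ⊗ₖ (vecMulVec b1 (star b1))
            + (vecMulVec b2 (star b2)) ⊗ₖ (vecMulVec b2 (star b2))
            + (vecMulVec b3 (star b3)) ⊗ₖ (vecMulVec b3 (star b3)))
          - (ε:ℂ) • ((vecMulVec a₁ (star a₁)) ⊗ₖ (vecMulVec a₁ (star a₁)))
          - (ε:ℂ) • ((vecMulVec a₂ (star a₂)) ⊗ₖ (vecMulVec a₂ (star a₂))) := by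
      rw [hkey]
      module
    rw [h4]
    push_cast
    module
  rw [hmain]
  have hE1 : Separable ((ε:ℂ) • ((vecMulVec a₁ (star a₁)) ⊗ₖ (vecMulVec a₁ (star a₁)))) :=
    Separable.smul_real ε hε0 (separable_single a₁ a₁)
  have hE2 : Separable ((ε:ℂ) • ((vecMulVec a₂ (star a₂)) ⊗ₖ (vecMulVec a₂ (star a₂)))) :=
    Separable.smul_real ε hε0 (separable_single a₂ a₂)
  have q : (0:ℝ) ≤ 1/4 := by norm_num
  exact (((((Separable.smul_real (1/4) q hG0).add (Separable.smul_real (1/4) q hG1)).add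
    (Separable.smul_real (1/4) q hG2)).add (Separable.smul_real (1/4) q hG3)).add hE1).add hE2
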